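/- For a direct sum of chains D = ⊕_{i∈I} C_i, the sibling number of D is at least the supremum of the sibling numbers of its components: Sib(D) ≥ max{Sib(C_i) : i ∈ I}. In particular, if some component has infinitely many siblings up to isomorphism, so does D. -/

import Mathlib

open Cardinal

/-- Two preorders are equimorphic (siblings) if each order-embeds into the other. -/
def Equimorphic (α : Type*) (β : Type*) [Preorder α] [Preorder β] : Prop :=
  Nonempty (α ↪o β) ∧ Nonempty (β ↪o α)

/-- The setoid identifying order-isomorphic equimorphic substructures. -/
def sibSetoid (α : Type*) [Preorder α] : Setoid {S : Set α // Equimorphic S α} :=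
  ⟨fun S T => Nonempty ((S : Set α) ≃o (T : Set α)),
    ⟨fun _ => ⟨OrderIso.refl _⟩, fun ⟨e⟩ => ⟨e.symm⟩, fun ⟨e⟩ ⟨f⟩ => ⟨e.trans f⟩⟩⟩

/-- The sibling number of a structure: the number of isomorphism classes of
substructures equimorphic to it (every sibling is isomorphic to such a substructure). -/
noncomputable def sibNumber (α : Type*) [Preorder α] : Cardinal :=
  #(Quotient (sibSetoid α))

namespace SibAux

variable {I : Type} {α β : I → Type}

/-- componentwise order embedding on sigma (disjoint sum order) -/
def sigmaCongrEmb [∀ i, Preorder (α i)] [∀ i, Preorder (β i)]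
    (f : ∀ i, α i ↪o β i) : (Σ i, α i) ↪o (Σ i, β i) where
  toFun x := ⟨x.1, f x.1 x.2⟩
  inj' := by
    rintro ⟨i, a⟩ ⟨j, b⟩ h
    obtain ⟨rfl, h2⟩ := Sigma.mk.inj_iff.1 h
    exact Sigma.ext rfl (heq_of_eq ((f i).injective (eq_of_heq h2)))
  map_rel_iff' := by
    rintro ⟨i, a⟩ ⟨j, b⟩
    constructor
    · intro h
      rw [Sigma.le_def] at h
      obtain ⟨(rfl : i = j), hle⟩ := h
      exact Sigma.LE.fiber _ _ _ ((f i).le_iff_le.1 hle)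
    · rintro ⟨_, _, _, h⟩
      exact Sigma.LE.fiber _ _ _ ((f i).le_iff_le.2 h)

/-- componentwise order iso on sigma -/
def sigmaCongrIso [∀ i, Preorder (α i)] [∀ i, Preorder (β i)]
    (f : ∀ i, α i ≃o β i) : (Σ i, α i) ≃o (Σ i, β i) where
  toFun x := ⟨x.1, f x.1 x.2⟩
  invFun x := ⟨x.1, (f x.1).symm x.2⟩
  left_inv := by rintro ⟨i, a⟩; simp
  right_inv := by rintro ⟨i, a⟩; simp
  map_rel_iff' := @fun a b =>
    (sigmaCongrEmb (fun i => (f i).toOrderEmbedding)).map_rel_iff (a := a) (b := b)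

variable {γ : I → Type} [∀ i, Preorder (γ i)]

/-- the subset of the sigma type determined by a family of subsets -/
def toSet (A : ∀ i, Set (γ i)) : Set (Σ i, γ i) := {x | x.2 ∈ A x.1}

/-- order iso between the subset and the sigma of subtypes -/
def isoSD (A : ∀ i, Set (γ i)) : ↥(toSet A) ≃o (Σ i, ↥(A i)) where
  toFun x := ⟨x.1.1, ⟨x.1.2, x.2⟩⟩
  invFun x := ⟨⟨x.1, x.2.1⟩, x.2.2⟩
  left_inv := by rintro ⟨⟨i, a⟩, h⟩; rfl
  right_inv := by rintro ⟨i, a, h⟩; rfl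
  map_rel_iff' := by
    rintro ⟨⟨i, a⟩, ha⟩ ⟨⟨j, b⟩, hb⟩
    show (⟨i, ⟨a, ha⟩⟩ : Σ i, ↥(A i)) ≤ ⟨j, ⟨b, hb⟩⟩ ↔ (⟨i, a⟩ : Σ i, γ i) ≤ ⟨j, b⟩
    constructor
    · intro h
      rw [Sigma.le_def] at h
      obtain ⟨(rfl : i = j), hle⟩ := h
      exact Sigma.LE.fiber _ _ _ hle
    · intro h
      rw [Sigma.le_def] at h
      obtain ⟨(rfl : i = j), hle⟩ := h
      exact Sigma.LE.fiber _ _ _ hle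

theorem exists_fiber_iso {α β : I → Type} [∀ i, LinearOrder (α i)] [∀ i, LinearOrder (β i)]
    (w : (Σ i, α i) ≃o (Σ i, β i)) (i : I) [ne : Nonempty (α i)] :
    ∃ k, Nonempty (α i ≃o β k) := by
  obtain ⟨a0⟩ := ne
  refine ⟨(w ⟨i, a0⟩).1, ?_⟩
  set k := (w ⟨i, a0⟩).1 with hk
  have hfst : ∀ a : α i, (w ⟨i, a⟩).1 = k := by
    intro a
    rcases le_total a a0 with h | h
    · obtain ⟨he, -⟩ := Sigma.le_def.1 (w.le_iff_le.2 (Sigma.LE.fiber _ _ _ h :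
        (⟨i, a⟩ : Σ i, α i) ≤ ⟨i, a0⟩))
      exact he
    · obtain ⟨he, -⟩ := Sigma.le_def.1 (w.le_iff_le.2 (Sigma.LE.fiber _ _ _ h :
        (⟨i, a0⟩ : Σ i, α i) ≤ ⟨i, a⟩))
      exact he.symm
  let u : α i → β k := fun a => (hfst a) ▸ (w ⟨i, a⟩).2
  have key : ∀ a : α i, w ⟨i, a⟩ = ⟨k, u a⟩ := fun a =>
    Sigma.ext (hfst a) (eqRec_heq _ _).symm
  have hinj : Function.Injective u := by
    intro a a' h
    have : w ⟨i, a⟩ = w ⟨i, a'⟩ := by rw [key, key, h]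
    exact sigma_mk_injective (w.injective this)
  have hsurj : Function.Surjective u := by
    intro b
    set x := w.symm ⟨k, b⟩ with hx
    have hx1 : x.1 = i := by
      have hcomp : (⟨k, b⟩ : Σ i, β i) ≤ ⟨k, u a0⟩ ∨ (⟨k, u a0⟩ : Σ i, β i) ≤ ⟨k, b⟩ := by
        rcases le_total b (u a0) with h | h
        · exact Or.inl (Sigma.LE.fiber _ _ _ h)
        · exact Or.inr (Sigma.LE.fiber _ _ _ h)
      have hws : w.symm ⟨k, u a0⟩ = ⟨i, a0⟩ := by
        rw [← key a0]; exact w.symm_apply_apply _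
      rcases hcomp with h | h
      · have := w.symm.le_iff_le.2 h
        rw [hws] at this
        obtain ⟨he, -⟩ := Sigma.le_def.1 this
        exact he
      · have := w.symm.le_iff_le.2 h
        rw [hws] at this
        obtain ⟨he, -⟩ := Sigma.le_def.1 this
        exact he.symm
    refine ⟨hx1 ▸ x.2, ?_⟩
    have hxe : (⟨i, hx1 ▸ x.2⟩ : Σ i, α i) = x := (Sigma.ext hx1 (eqRec_heq _ _).symm).symm
    have : w ⟨i, hx1 ▸ x.2⟩ = ⟨k, b⟩ := by rw [hxe, hx]; exact w.apply_symm_apply _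
    rw [key] at this
    exact eq_of_heq (Sigma.mk.inj_iff.1 this).2
  exact ⟨{ toEquiv := Equiv.ofBijective u ⟨hinj, hsurj⟩
           map_rel_iff' := by
             intro a a'
             show u a ≤ u a' ↔ a ≤ a'
             rw [← Sigma.mk_le_mk_iff (i := k), ← key, ← key, w.le_iff_le,
               Sigma.mk_le_mk_iff] }⟩

section Main

variable {I : Type} {C : I → Type} [∀ i, LinearOrder (C i)] [∀ i, Nonempty (C i)] {i : I}

open Classical in
/-- the family of subsets: a copy of `S` in every component equimorphic to `C i`,
and the whole component otherwise. -/
noncomputable def A (S : {S : Set (C i) // Equimorphic ↥S (C i)}) (j : I) : Set (C j) :=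
  if h : Equimorphic (C j) (C i) then
    Set.range ((OrderEmbedding.subtype (· ∈ S.1)).trans (Classical.choice h.2))
  else Set.univ

noncomputable def isoApos (S : {S : Set (C i) // Equimorphic ↥S (C i)}) {j : I}
    (h : Equimorphic (C j) (C i)) : ↥(A S j) ≃o ↥S.1 :=
  (OrderIso.setCongr _ _ (dif_pos h)).trans OrderEmbedding.orderIso.symm

noncomputable def isoAneg (S : {S : Set (C i) // Equimorphic ↥S (C i)}) {j : I}
    (h : ¬ Equimorphic (C j) (C i)) : ↥(A S j) ≃o C j :=
  (OrderIso.setCongr _ _ (dif_neg h)).trans OrderIso.Set.univ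

lemma equimA (S : {S : Set (C i) // Equimorphic ↥S (C i)}) :
    Equimorphic ↥(toSet (A S)) (Σ j, C j) := by
  constructor
  · exact ⟨OrderEmbedding.subtype _⟩
  · refine ⟨(sigmaCongrEmb fun j => ?_).trans (isoSD (A S)).symm.toOrderEmbedding⟩
    by_cases h : Equimorphic (C j) (C i)
    · exact (Classical.choice h.1).trans ((Classical.choice S.2.2).trans
        (isoApos S h).symm.toOrderEmbedding)
    · exact (isoAneg S h).symm.toOrderEmbedding

noncomputable def TT (S : {S : Set (C i) // Equimorphic ↥S (C i)}) :
    {T : Set (Σ j, C j) // Equimorphic ↥T (Σ j, C j)} :=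
  ⟨toSet (A S), equimA S⟩

lemma TT_resp (S S' : {S : Set (C i) // Equimorphic ↥S (C i)})
    (hSS' : Nonempty (↥S.1 ≃o ↥S'.1)) :
    Nonempty (↥(toSet (A S)) ≃o ↥(toSet (A S'))) := by
  obtain ⟨φ⟩ := hSS'
  refine ⟨(isoSD (A S)).trans ((sigmaCongrIso fun j => ?_).trans (isoSD (A S')).symm)⟩
  by_cases h : Equimorphic (C j) (C i)
  · exact (isoApos S h).trans (φ.trans (isoApos S' h).symm)
  · exact (isoAneg S h).trans (isoAneg S' h).symm

lemma equim_refl : Equimorphic (C i) (C i) :=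
  ⟨⟨(OrderIso.refl _).toOrderEmbedding⟩, ⟨(OrderIso.refl _).toOrderEmbedding⟩⟩

lemma TT_inj (S S' : {S : Set (C i) // Equimorphic ↥S (C i)})
    (hT : Nonempty (↥(toSet (A S)) ≃o ↥(toSet (A S')))) :
    Nonempty (↥S.1 ≃o ↥S'.1) := by
  obtain ⟨w0⟩ := hT
  have w : (Σ j, ↥(A S j)) ≃o (Σ j, ↥(A S' j)) :=
    (isoSD (A S)).symm.trans (w0.trans (isoSD (A S')))
  have hS1 : Nonempty ↥S.1 := ⟨Classical.choice S.2.2 (Classical.arbitrary (C i))⟩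
  haveI : Nonempty ↥(A S i) := ⟨(isoApos S equim_refl).symm hS1.some⟩
  obtain ⟨k, ⟨v⟩⟩ := exists_fiber_iso w i
  by_cases h : Equimorphic (C k) (C i)
  · exact ⟨(isoApos S equim_refl).symm.trans (v.trans (isoApos S' h))⟩
  · exfalso
    apply h
    have iso : C k ≃o ↥S.1 := (isoAneg S' h).symm.trans (v.symm.trans (isoApos S equim_refl))
    exact ⟨⟨iso.toOrderEmbedding.trans (Classical.choice S.2.1)⟩,
      ⟨(Classical.choice S.2.2).trans iso.symm.toOrderEmbedding⟩⟩

lemma sib_le (i : I) : sibNumber (C i) ≤ sibNumber (Σ j, C j) := by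
  have resp : ∀ S S', sibSetoid (C i) |>.r S S' → (sibSetoid (Σ j, C j)).r (TT S) (TT S') :=
    fun S S' h => TT_resp S S' h
  refine Cardinal.mk_le_of_injective
    (f := (Quotient.map (TT (i := i)) resp :
      Quotient (sibSetoid (C i)) → Quotient (sibSetoid (Σ j, C j)))) ?_
  intro q q'
  refine Quotient.inductionOn₂ q q' (fun S S' h => ?_)
  rw [Quotient.map_mk, Quotient.map_mk] at h
  exact Quotient.sound (TT_inj S S' (Quotient.exact h))

end Main

end SibAux

theorem sib_ge_sup_components (I : Type) (C : I → Type)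
    [∀ i, LinearOrder (C i)] [∀ i, Nonempty (C i)] :
    (⨆ i, sibNumber (C i)) ≤ sibNumber (Σ i, C i) ∧
    ∀ i, ℵ₀ ≤ sibNumber (C i) → ℵ₀ ≤ sibNumber (Σ i, C i) := by
  exact ⟨ciSup_le' fun i => SibAux.sib_le i, fun i h => h.trans (SibAux.sib_le i)⟩
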